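/- Let d ≥ 1, k ≥ 1, and let t₁, …, t_{2k+2} ∈ ℤ^d be an O_k-configuration that is not ℓ1-isometric to O_k. Then there exists a point t ∈ ℤ^d such that ‖t − t_i‖_∞ = 1 for every index i. -/
import Mathlib


/-- The `ℓ∞` distance between two points of `ℤ^d`, as a natural number. -/
def linfDist {d : ℕ} (x y : Fin d → ℤ) : ℕ :=
  Finset.univ.sup fun i => (x i - y i).natAbs

/-- The `ℓ1` distance between two points of `ℤ^d`, as a natural number. -/
def l1Dist {d : ℕ} (x y : Fin d → ℤ) : ℕ :=
  ∑ i, (x i - y i).natAbs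

/-- A family of `2k+2` distinct points of `ℤ^d` is an `O_k`-configuration if, in the graph on the
indices with an edge exactly when the `ℓ∞` distance is `1`, every index is adjacent to all others
except exactly one. -/
def IsOkConfig (d k : ℕ) (t : Fin (2 * k + 2) → Fin d → ℤ) : Prop :=
  Function.Injective t ∧
    ∀ i : Fin (2 * k + 2), ∃! i' : Fin (2 * k + 2), i' ≠ i ∧ linfDist (t i) (t i') ≠ 1

lemma linfDist_symm {d : ℕ} (x y : Fin d → ℤ) : linfDist x y = linfDist y x := by
  unfold linfDist
  refine Finset.sup_congr rfl (fun m _ => ?_)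
  omega

lemma coord_le_linfDist {d : ℕ} (x y : Fin d → ℤ) (m : Fin d) :
    (x m - y m).natAbs ≤ linfDist x y := by
  unfold linfDist
  exact Finset.le_sup (f := fun i => (x i - y i).natAbs) (Finset.mem_univ m)

/-- If an `O_k`-configuration is not `ℓ1`-isometric to `O_k`, then there is a
point of `ℤ^d` at `ℓ∞` distance exactly `1` from every point of the configuration. -/
theorem okConfig_not_isometric_common_neighbor (d k : ℕ) (hd : 1 ≤ d) (hk : 1 ≤ k)
    (ts : Fin (2 * k + 2) → Fin d → ℤ) (ht : IsOkConfig d k ts)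
    (hnotiso : ¬ ∀ i j : Fin (2 * k + 2), i ≠ j → l1Dist (ts i) (ts j) = 2) :
    ∃ t : Fin d → ℤ, ∀ i : Fin (2 * k + 2), linfDist t (ts i) = 1 := by
  obtain ⟨hinj, hm⟩ := ht
  -- extract the matching function
  choose f hf hfu using hm
  have hfne : ∀ i, f i ≠ i := fun i => (hf i).1
  have hfdist : ∀ i, linfDist (ts i) (ts (f i)) ≠ 1 := fun i => (hf i).2
  -- adjacency for all non-matched pairs
  have adj : ∀ i j, j ≠ i → j ≠ f i → linfDist (ts i) (ts j) = 1 := by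
    intro i j h1 h2
    by_contra h
    exact h2 (hfu i j ⟨h1, h⟩)
  -- f is an involution
  have finv : ∀ i, f (f i) = i := by
    intro i
    exact (hfu (f i) i ⟨Ne.symm (hfne i), by rw [linfDist_symm]; exact hfdist i⟩).symm
  have adjc : ∀ i j (m : Fin d), j ≠ i → j ≠ f i → (ts i m - ts j m).natAbs ≤ 1 := by
    intro i j m h1 h2
    exact le_of_le_of_eq (coord_le_linfDist _ _ m) (adj i j h1 h2)
  -- a third point exists
  have third : ∀ i : Fin (2 * k + 2), ∃ c, c ≠ i ∧ c ≠ f i := by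
    intro i
    by_contra h
    push_neg at h
    have hsub : (Finset.univ : Finset (Fin (2 * k + 2))) ⊆ {i, f i} := by
      intro c _
      rcases eq_or_ne c i with h' | h'
      · simp [h']
      · simp [h c h']
    have h1 : (Finset.univ : Finset (Fin (2 * k + 2))).card ≤ ({i, f i} : Finset _).card :=
      Finset.card_le_card hsub
    have h2 : ({i, f i} : Finset (Fin (2 * k + 2))).card ≤ 2 := by
      apply le_trans (Finset.card_insert_le _ _)
      simp
    rw [Finset.card_univ, Fintype.card_fin] at h1
    omega
  -- the matched pair is split by at least 2 in some coordinate
  have paircoord : ∀ i, ∃ m, 2 ≤ (ts i m - ts (f i) m).natAbs := by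
    intro i
    by_contra h
    push_neg at h
    have hle : linfDist (ts i) (ts (f i)) ≤ 1 :=
      Finset.sup_le (fun m _ => by have := h m; omega)
    have h0 : linfDist (ts i) (ts (f i)) = 0 := by
      have := hfdist i; omega
    have : ts i = ts (f i) := by
      funext m
      have := coord_le_linfDist (ts i) (ts (f i)) m
      rw [h0] at this
      omega
    exact hfne i (hinj this).symm
  -- the common neighbor: coordinatewise minimum plus one
  have hne : (Finset.univ : Finset (Fin (2 * k + 2))).Nonempty := Finset.univ_nonempty
  -- every coordinate is within 1
  have step5 : ∀ i (m : Fin d),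
      (((Finset.univ.inf' hne fun j => ts j m) + 1) - ts i m).natAbs ≤ 1 := by
    intro i m
    obtain ⟨i0, _, hi0⟩ := Finset.exists_mem_eq_inf' hne (fun i => ts i m)
    have hv_le : (Finset.univ.inf' hne fun i => ts i m) ≤ ts i m :=
      Finset.inf'_le _ (Finset.mem_univ i)
    have hup : ts i m ≤ ts i0 m + 2 := by
      rcases eq_or_ne i0 i with h' | h'
      · rw [h']; omega
      · rcases eq_or_ne i0 (f i) with h'' | h''
        · obtain ⟨c, hc1, hc2⟩ := third i
          have h1 := adjc i c m hc1 hc2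
          have h2 := adjc (f i) c m hc2 (by rw [finv]; exact hc1)
          rw [h'']
          omega
        · have := adjc i i0 m h' h''
          omega
    omega
  -- some coordinate is exactly 1
  have step6 : ∀ i, ∃ m : Fin d,
      (((Finset.univ.inf' hne fun j => ts j m) + 1) - ts i m).natAbs = 1 := by
    intro i
    obtain ⟨m, hm2⟩ := paircoord i
    obtain ⟨c, hc1, hc2⟩ := third i
    refine ⟨m, ?_⟩
    have hax := adjc i c m hc1 hc2
    have hbx := adjc (f i) c m hc2 (by rw [finv]; exact hc1)
    have hva : (Finset.univ.inf' hne fun j => ts j m) ≤ ts i m :=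
      Finset.inf'_le _ (Finset.mem_univ i)
    have hvb : (Finset.univ.inf' hne fun j => ts j m) ≤ ts (f i) m :=
      Finset.inf'_le _ (Finset.mem_univ (f i))
    have hvlow : ts c m - 1 ≤ (Finset.univ.inf' hne fun j => ts j m) := by
      apply Finset.le_inf'
      intro j _
      rcases eq_or_ne j i with h' | h'
      · rw [h']; omega
      · rcases eq_or_ne j (f i) with h'' | h''
        · rw [h'']; omega
        · have h1 := adjc i j m h' h''
          have h2 := adjc (f i) j m h'' (by rw [finv]; exact h')
          omega
    omega
  refine ⟨fun m => (Finset.univ.inf' hne fun j => ts j m) + 1, fun i => ?_⟩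
  apply le_antisymm
  · exact Finset.sup_le (fun m _ => step5 i m)
  · obtain ⟨m, hm1⟩ := step6 i
    rw [← hm1]
    exact coord_le_linfDist (fun m => (Finset.univ.inf' hne fun j => ts j m) + 1) (ts i) m
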